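/- For all a₁, a₂, a₃ ∈ {1,2,3}, the identity (I ⊗ P_{a₃}) · W · (P_{a₁} ⊗ P_{a₂}) = 8 · ET[a₁,a₂,a₃] · W · (P_{a₁} ⊗ P_{a₂}) holds in the 256×256 complex matrices, where I is the 16×16 identity matrix. -/

import Mathlib

open Matrix Kronecker

/-- The pattern sets `S₁ = {0000, 1111}`, `S₂ = {0011, 1100}`, `S₃ = {0110, 1001}`
(indexed here by `Fin 3`). -/
def patS : Fin 3 → Finset (Fin 4 → Fin 2)
  | 0 => {![0, 0, 0, 0], ![1, 1, 1, 1]}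
  | 1 => {![0, 0, 1, 1], ![1, 1, 0, 0]}
  | 2 => {![0, 1, 1, 0], ![1, 0, 0, 1]}

/-- The standard basis vector `|s⟩` of `ℂ^{16} ≅ (ℂ²)^{⊗4}`. -/
def ket (s : Fin 4 → Fin 2) : (Fin 4 → Fin 2) → ℂ := fun t => if t = s then 1 else 0

/-- `P_a = Σ_{s ∈ S_a} |s⟩⟨s|`, the orthogonal projection onto `span{|s⟩ : s ∈ S_a}`. -/
noncomputable def Pproj (a : Fin 3) : Matrix (Fin 4 → Fin 2) (Fin 4 → Fin 2) ℂ :=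
  ∑ s ∈ patS a, Matrix.vecMulVec (ket s) (ket s)

/-- The unitary `W` on `ℂ^{16} ⊗ ℂ^{16}` with `W(|s⟩ ⊗ |t⟩) = |s⟩ ⊗ |s ⊕ t⟩`
(four parallel CNOT gates, controls in the first factor, targets in the second). -/
def Wcnot :
    Matrix ((Fin 4 → Fin 2) × (Fin 4 → Fin 2)) ((Fin 4 → Fin 2) × (Fin 4 → Fin 2)) ℂ :=
  fun p q => if p.1 = q.1 ∧ p.2 = (fun i => q.1 i + q.2 i) then 1 else 0

/-- The 3×3×3 tensor `ET`. -/
noncomputable def ET : Fin 3 → Matrix (Fin 3) (Fin 3) ℝ :=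
  ![(1 / 8 : ℝ) • !![1, 0, 0; 0, 1, 0; 0, 0, 1],
    (1 / 8 : ℝ) • !![0, 1, 0; 1, 0, 0; 0, 0, 0],
    (1 / 8 : ℝ) • !![0, 0, 1; 0, 0, 0; 1, 0, 0]]

lemma Pproj_apply (a : Fin 3) (t u : Fin 4 → Fin 2) :
    Pproj a t u = if t = u ∧ t ∈ patS a then 1 else 0 := by
  have key : ∀ (s₁ s₂ : Fin 4 → Fin 2), s₁ ≠ s₂ →
      (∑ s ∈ ({s₁, s₂} : Finset _), Matrix.vecMulVec (ket s) (ket s)) t u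
        = if t = u ∧ t ∈ ({s₁, s₂} : Finset _) then 1 else 0 := by
    intro s₁ s₂ h
    rw [Finset.sum_pair h]
    simp only [Matrix.add_apply, Matrix.vecMulVec_apply, ket, Finset.mem_insert,
      Finset.mem_singleton, ite_mul, one_mul, zero_mul]
    split_ifs <;> simp_all <;> aesop
  fin_cases a <;> exact key _ _ (by decide)

lemma Wcnot_apply (p r : (Fin 4 → Fin 2) × (Fin 4 → Fin 2)) :
    Wcnot p r = if r = (p.1, fun i => p.1 i + p.2 i) then 1 else 0 := by
  have h2 : ∀ x y : Fin 2, x + (x + y) = y := by decide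
  unfold Wcnot
  congr 1
  simp only [eq_iff_iff]
  constructor
  · rintro ⟨h1, h3⟩
    obtain ⟨r1, r2⟩ := r
    dsimp at h1 h3 ⊢
    subst h1
    refine Prod.ext rfl ?_
    funext i
    dsimp
    rw [show p.2 = fun i => p.1 i + r2 i from h3]
    exact (h2 _ _).symm
  · rintro rfl
    refine ⟨rfl, ?_⟩
    funext i
    exact (h2 _ _).symm

/-- Boolean version of `8 * ET`. -/
def Bt : Fin 3 → Fin 3 → Fin 3 → Bool
  | 0, b, c => b = c
  | 1, 0, 1 => true
  | 1, 1, 0 => true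
  | 2, 0, 2 => true
  | 2, 2, 0 => true
  | _, _, _ => false

lemma core (a₁ a₂ a₃ : Fin 3) (p1 p2 : Fin 4 → Fin 2) (h1 : p1 ∈ patS a₁)
    (h2 : (fun i => p1 i + p2 i) ∈ patS a₂) : (p2 ∈ patS a₃) ↔ Bt a₁ a₂ a₃ = true := by
  revert h1 h2; revert p1 p2; revert a₁ a₂ a₃; decide

lemma etval (a₁ a₂ a₃ : Fin 3) :
    ((8 * ET a₁ a₂ a₃ : ℝ) : ℂ) = if Bt a₁ a₂ a₃ then 1 else 0 := by
  fin_cases a₁ <;> fin_cases a₂ <;> fin_cases a₃ <;> norm_num [ET, Bt] <;>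
    simp +decide

/-- `(I ⊗ P_{a₃}) · W · (P_{a₁} ⊗ P_{a₂}) = 8 · ET[a₁,a₂,a₃] · W · (P_{a₁} ⊗ P_{a₂})`
in the 256×256 complex matrices, where `I` is the 16×16 identity. -/
theorem stmt5 (a₁ a₂ a₃ : Fin 3) :
    ((1 : Matrix (Fin 4 → Fin 2) (Fin 4 → Fin 2) ℂ) ⊗ₖ Pproj a₃) * Wcnot *
        (Pproj a₁ ⊗ₖ Pproj a₂)
      = ((8 * ET a₁ a₂ a₃ : ℝ) : ℂ) • (Wcnot * (Pproj a₁ ⊗ₖ Pproj a₂)) := by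
  ext p q
  rw [Matrix.mul_assoc, Matrix.smul_apply, smul_eq_mul]
  have hM : (Wcnot * (Pproj a₁ ⊗ₖ Pproj a₂)) p q
      = (if p.1 = q.1 ∧ p.1 ∈ patS a₁ then 1 else 0) *
        (if (fun i => p.1 i + p.2 i) = q.2 ∧ (fun i => p.1 i + p.2 i) ∈ patS a₂
          then (1 : ℂ) else 0) := by
    rw [Matrix.mul_apply]
    simp only [Wcnot_apply, ite_mul, one_mul, zero_mul]
    rw [Finset.sum_ite_eq' Finset.univ]
    simp only [Finset.mem_univ, if_true, Matrix.kroneckerMap_apply, Pproj_apply]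
    split_ifs <;> ring
  have hL : (((1 : Matrix (Fin 4 → Fin 2) (Fin 4 → Fin 2) ℂ) ⊗ₖ Pproj a₃) *
        (Wcnot * (Pproj a₁ ⊗ₖ Pproj a₂))) p q
      = (if p.2 ∈ patS a₃ then 1 else 0) * (Wcnot * (Pproj a₁ ⊗ₖ Pproj a₂)) p q := by
    rw [Matrix.mul_apply]
    have hI : ∀ r, ((1 : Matrix (Fin 4 → Fin 2) (Fin 4 → Fin 2) ℂ) ⊗ₖ Pproj a₃) p r
        = (if p.2 ∈ patS a₃ then 1 else 0) * (if r = p then 1 else 0) := by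
      intro r
      rw [Matrix.kroneckerMap_apply, Pproj_apply, Matrix.one_apply]
      split_ifs <;> simp_all [Prod.ext_iff, eq_comm]
    simp only [hI, mul_assoc, ← Finset.mul_sum]
    congr 1
    simp [ite_mul, one_mul, zero_mul, Finset.sum_ite_eq' Finset.univ]
  rw [hL, hM, etval]
  by_cases h1 : p.1 = q.1 ∧ p.1 ∈ patS a₁
  · by_cases h2 : (fun i => p.1 i + p.2 i) = q.2 ∧ (fun i => p.1 i + p.2 i) ∈ patS a₂
    · rw [if_pos h1, if_pos h2]
      have hc := core a₁ a₂ a₃ p.1 p.2 h1.2 h2.2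
      by_cases h3 : p.2 ∈ patS a₃
      · rw [if_pos h3, if_pos (hc.mp h3)]
      · rw [if_neg h3, if_neg (fun hb => h3 (hc.mpr hb))]
    · simp [h2]
  · simp [h1]
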